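/- Let h be a holomorphic function on the punctured unit disk Δ* = {z ∈ ℂ : 0 < |z| < 1} such that |exp(i·h(z))| ≤ 1/|z| for all z ∈ Δ*. Then h extends to a holomorphic function on the whole open unit disk Δ = {|z| < 1}. (This is the single-valuedness argument in the parabolic case of the paper's regular-singularity theorem: z·exp(i·h) is bounded, so exp(i·h) = z^m·φ with φ holomorphic nonvanishing, and single-valuedness of h forces m = 0.) -/

import Mathlib

open Complex Metric Filter Set Topology

noncomputable section

private lemma hSeq : {z : ℂ | z ≠ 0 ∧ ‖z‖ < 1} = ball (0:ℂ) 1 \ {0} := by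
  ext z; simp [mem_ball_zero_iff, and_comm]

private lemma hSopen : IsOpen {z : ℂ | z ≠ 0 ∧ ‖z‖ < 1} := by
  rw [hSeq]; exact isOpen_ball.sdiff isClosed_singleton

private lemma hSnhds : 𝓝[{z : ℂ | z ≠ 0 ∧ ‖z‖ < 1}] (0:ℂ) = 𝓝[≠] (0:ℂ) := by
  rw [hSeq]
  have : ball (0:ℂ) 1 \ {0} = {(0:ℂ)}ᶜ ∩ ball (0:ℂ) 1 := by
    ext z; simp [and_comm]
  rw [this, ← nhdsWithin_restrict' _ (ball_mem_nhds (0:ℂ) one_pos)]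

/-- two functions differentiable on the ball agreeing on the punctured ball agree on the ball -/
private lemma eq_on_ball (F G : ℂ → ℂ)
    (hF : DifferentiableOn ℂ F (ball (0:ℂ) 1)) (hG : DifferentiableOn ℂ G (ball (0:ℂ) 1))
    (he : ∀ z : ℂ, z ≠ 0 → ‖z‖ < 1 → F z = G z) :
    ∀ z ∈ ball (0:ℂ) 1, F z = G z := by
  intro z hz
  rcases eq_or_ne z 0 with rfl | hz0
  · have hFc : Filter.Tendsto F (𝓝[≠] (0:ℂ)) (𝓝 (F 0)) :=
      ((hF.differentiableAt (isOpen_ball.mem_nhds hz)).continuousAt).tendsto.mono_left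
        nhdsWithin_le_nhds
    have hGc : Filter.Tendsto G (𝓝[≠] (0:ℂ)) (𝓝 (G 0)) :=
      ((hG.differentiableAt (isOpen_ball.mem_nhds hz)).continuousAt).tendsto.mono_left
        nhdsWithin_le_nhds
    have hev : ∀ᶠ w in 𝓝[≠] (0:ℂ), F w = G w := by
      rw [← hSnhds]
      filter_upwards [self_mem_nhdsWithin] with w hw
      exact he w hw.1 hw.2
    exact tendsto_nhds_unique (hFc.congr' hev) hGc
  · exact he z hz0 (mem_ball_zero_iff.mp hz)

/-- extension lemma: a function bounded by ‖z‖^(-1/2) on the punctured disk extends -/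
private lemma extA (g : ℂ → ℂ)
    (hg : DifferentiableOn ℂ g {z : ℂ | z ≠ 0 ∧ ‖z‖ < 1})
    (hb : ∀ z : ℂ, z ≠ 0 → ‖z‖ < 1 → ‖g z‖ ≤ ‖z‖ ^ (-(1/2) : ℝ)) :
    ∃ G : ℂ → ℂ, DifferentiableOn ℂ G (ball (0:ℂ) 1) ∧
      ∀ z : ℂ, z ≠ 0 → ‖z‖ < 1 → G z = g z := by
  set f : ℂ → ℂ := fun z => z * g z with hf
  have hfd : DifferentiableOn ℂ f (ball (0:ℂ) 1 \ {0}) := by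
    rw [← hSeq]; exact differentiableOn_id.mul hg
  have hfb : ∀ z : ℂ, z ≠ 0 → ‖z‖ < 1 → ‖f z‖ ≤ Real.sqrt ‖z‖ := by
    intro z hz0 hz1
    have hzpos : (0:ℝ) < ‖z‖ := norm_pos_iff.mpr hz0
    have : ‖f z‖ = ‖z‖ * ‖g z‖ := norm_mul _ _
    rw [this]
    calc ‖z‖ * ‖g z‖ ≤ ‖z‖ * ‖z‖ ^ (-(1/2) : ℝ) := by
          exact mul_le_mul_of_nonneg_left (hb z hz0 hz1) hzpos.le
      _ = ‖z‖ ^ ((1:ℝ) + -(1/2)) := by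
          rw [Real.rpow_add hzpos, Real.rpow_one]
      _ = ‖z‖ ^ ((1:ℝ)/2) := by norm_num
      _ = Real.sqrt ‖z‖ := by rw [Real.sqrt_eq_rpow]
  have hbdd : BddAbove (norm ∘ f '' (ball (0:ℂ) 1 \ {0})) := by
    refine ⟨1, ?_⟩
    rintro x ⟨z, hz, rfl⟩
    have hz1 : ‖z‖ < 1 := mem_ball_zero_iff.mp hz.1
    have hz0 : z ≠ 0 := hz.2
    have := hfb z hz0 hz1
    calc (norm ∘ f) z ≤ Real.sqrt ‖z‖ := this
      _ ≤ Real.sqrt 1 := Real.sqrt_le_sqrt hz1.le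
      _ = 1 := Real.sqrt_one
  set F : ℂ → ℂ := Function.update f 0 (limUnder (𝓝[≠] (0:ℂ)) f) with hF
  have hFd : DifferentiableOn ℂ F (ball (0:ℂ) 1) :=
    Complex.differentiableOn_update_limUnder_of_bddAbove
      (ball_mem_nhds (0:ℂ) one_pos) hfd hbdd
  have hF0 : F 0 = 0 := by
    have hFc : Filter.Tendsto F (𝓝[≠] (0:ℂ)) (𝓝 (F 0)) :=
      ((hFd.differentiableAt (isOpen_ball.mem_nhds (mem_ball_self one_pos))).continuousAt).tendsto.mono_left
        nhdsWithin_le_nhds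
    have hsq : Filter.Tendsto (fun z : ℂ => Real.sqrt ‖z‖) (𝓝[≠] (0:ℂ)) (𝓝 0) := by
      have : Filter.Tendsto (fun z : ℂ => Real.sqrt ‖z‖) (𝓝 (0:ℂ)) (𝓝 (Real.sqrt ‖(0:ℂ)‖)) :=
        (Real.continuous_sqrt.comp continuous_norm).tendsto 0
      simpa using this.mono_left nhdsWithin_le_nhds
    have hFz : Filter.Tendsto F (𝓝[≠] (0:ℂ)) (𝓝 0) := by
      apply squeeze_zero_norm' _ hsq
      rw [← hSnhds]
      filter_upwards [self_mem_nhdsWithin] with w hw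
      have : F w = f w := Function.update_of_ne hw.1 _ _
      rw [this]
      exact hfb w hw.1 hw.2
    exact tendsto_nhds_unique hFc hFz
  refine ⟨dslope F 0, (differentiableOn_dslope (ball_mem_nhds (0:ℂ) one_pos)).mpr hFd, ?_⟩
  intro z hz0 hz1
  rw [dslope_of_ne _ hz0, slope_def_field, hF0]
  have : F z = f z := Function.update_of_ne hz0 _ _
  rw [this]
  simp only [hf, sub_zero]
  field_simp

theorem holomorphic_extension_from_exp_bound
    (h : ℂ → ℂ)
    (hh : DifferentiableOn ℂ h {z : ℂ | z ≠ 0 ∧ ‖z‖ < 1})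
    (hbd : ∀ z : ℂ, z ≠ 0 → ‖z‖ < 1 →
      ‖Complex.exp (Complex.I * h z)‖ ≤ 1 / ‖z‖) :
    ∃ H : ℂ → ℂ, DifferentiableOn ℂ H (ball (0 : ℂ) 1) ∧
      ∀ z : ℂ, z ≠ 0 → ‖z‖ < 1 → H z = h z := by
  -- Step 1: construct the roots ψ n extending exp (I h z / 2^(n+1))
  have hpsi : ∀ n : ℕ, ∃ G : ℂ → ℂ, DifferentiableOn ℂ G (ball (0:ℂ) 1) ∧
      ∀ z : ℂ, z ≠ 0 → ‖z‖ < 1 → G z = Complex.exp (Complex.I * h z / 2 ^ (n+1)) := by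
    intro n
    apply extA
    · exact ((hh.const_mul Complex.I).div_const _).cexp
    · intro z hz0 hz1
      have hzpos : (0:ℝ) < ‖z‖ := norm_pos_iff.mpr hz0
      have hre : (Complex.I * h z / 2 ^ (n+1)).re = (Complex.I * h z).re / 2 ^ (n+1) := by
        have : ((2:ℂ) ^ (n+1)) = (((2:ℝ) ^ (n+1) : ℝ) : ℂ) := by push_cast; ring
        rw [this, Complex.div_ofReal_re]
      rw [Complex.norm_exp, hre]
      set t : ℝ := (Complex.I * h z).re with ht
      have h1 : Real.exp t ≤ 1 / ‖z‖ := by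
        have := hbd z hz0 hz1
        rwa [Complex.norm_exp] at this
      have h2 : t ≤ -Real.log ‖z‖ := by
        have := (Real.le_log_iff_exp_le (by positivity : (0:ℝ) < 1 / ‖z‖)).mpr h1
        rwa [one_div, Real.log_inv] at this
      have hlog : 0 ≤ -Real.log ‖z‖ := by
        have := Real.log_nonpos hzpos.le hz1.le
        linarith
      have h3 : t / 2 ^ (n+1) ≤ (-Real.log ‖z‖) * (1/2) := by
        have e1 : t / 2 ^ (n+1) ≤ (-Real.log ‖z‖) / 2 ^ (n+1) := by
          apply div_le_div_of_nonneg_right h2 ?_ |>.trans_eq rfl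
          · positivity
        refine e1.trans ?_
        rw [div_eq_mul_inv]
        apply mul_le_mul_of_nonneg_left _ hlog
        rw [one_div]
        apply inv_anti₀ (by norm_num)
        calc (2:ℝ) = 2 ^ 1 := (pow_one 2).symm
          _ ≤ 2 ^ (n+1) := by
            apply pow_le_pow_right₀ (by norm_num)
            omega
      calc Real.exp (t / 2 ^ (n+1)) ≤ Real.exp ((-Real.log ‖z‖) * (1/2)) := Real.exp_le_exp.mpr h3
        _ = ‖z‖ ^ (-(1/2) : ℝ) := by
          rw [Real.rpow_def_of_pos hzpos]
          congr 1
          ring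
  choose ψ hψd hψe using hpsi
  -- Step 2: the relation ψ n = (ψ (n+1))^2 on the ball
  have hrelB : ∀ n : ℕ, ∀ z ∈ ball (0:ℂ) 1, ψ n z = (ψ (n+1) z) ^ 2 := by
    intro n
    apply eq_on_ball _ _ (hψd n) ((hψd (n+1)).pow 2)
    intro z hz0 hz1
    rw [hψe n z hz0 hz1, Pi.pow_apply, hψe (n+1) z hz0 hz1, ← Complex.exp_nat_mul]
    congr 1
    have h2 : ((2:ℂ) ^ (n+2)) ≠ 0 := pow_ne_zero _ (by norm_num)
    field_simp
    ring
  -- Step 3: ψ 0 z ^ 1? the iterated relation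
  have hpow : ∀ n : ℕ, ∀ z ∈ ball (0:ℂ) 1, ψ 0 z = (ψ n z) ^ (2 ^ n) := by
    intro n
    induction n with
    | zero => intro z hz; simp
    | succ m ih =>
      intro z hz
      rw [ih z hz, hrelB m z hz, ← pow_mul]
      congr 1
      ring
  -- Step 4: ψ 0 0 ≠ 0
  have hψ00 : ψ 0 0 ≠ 0 := by
    intro h0
    have h0mem : (0:ℂ) ∈ ball (0:ℂ) 1 := mem_ball_self one_pos
    have hzero : ∀ n : ℕ, ψ n 0 = 0 := by
      intro n
      induction n with
      | zero => exact h0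
      | succ m ih =>
        have := hrelB m 0 h0mem
        rw [ih] at this
        exact sq_eq_zero_iff.mp this.symm
    have an : ∀ n : ℕ, AnalyticAt ℂ (ψ n) 0 :=
      fun n => (hψd n).analyticAt (isOpen_ball.mem_nhds h0mem)
    have hne : ∀ n : ℕ, ¬ (∀ᶠ z in 𝓝 (0:ℂ), ψ n z = 0) := by
      intro n hev
      rw [Metric.eventually_nhds_iff] at hev
      obtain ⟨ε, hε, hb⟩ := hev
      set w : ℂ := ((min (ε/2) (1/2) : ℝ) : ℂ) with hw
      have hmin : (0:ℝ) < min (ε/2) (1/2) := lt_min (by linarith) (by norm_num)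
      have hw0 : w ≠ 0 := by
        simp only [hw, ne_eq, Complex.ofReal_eq_zero]
        exact ne_of_gt hmin
      have hwn : ‖w‖ = min (ε/2) (1/2) := by
        rw [hw, Complex.norm_real, Real.norm_eq_abs, abs_of_pos hmin]
      have hw1 : ‖w‖ < 1 := by rw [hwn]; exact lt_of_le_of_lt (min_le_right _ _) (by norm_num)
      have hwd : dist w 0 < ε := by
        rw [dist_zero_right, hwn]
        exact lt_of_le_of_lt (min_le_left _ _) (by linarith)
      have := hb hwd
      rw [hψe n w hw0 hw1] at this
      exact Complex.exp_ne_zero _ this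
    have ordfin : ∀ n : ℕ, ∃ M : ℕ, analyticOrderAt (ψ n) 0 = (M : ℕ∞) ∧ 1 ≤ M := by
      intro n
      have h1 : analyticOrderAt (ψ n) 0 ≠ ⊤ := by
        intro hc
        exact hne n (analyticOrderAt_eq_top.mp hc)
      obtain ⟨M, hM⟩ := WithTop.ne_top_iff_exists.mp h1
      refine ⟨M, hM.symm, ?_⟩
      by_contra hM0
      push_neg at hM0
      interval_cases M
      obtain ⟨g, hga, hg0, hgev⟩ := ((an n).analyticOrderAt_eq_natCast (n := 0)).mp hM.symm
      have := hgev.self_of_nhds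
      simp only [pow_zero, one_smul] at this
      rw [hzero n] at this
      exact hg0 this.symm
    have key2 : ∀ n M : ℕ, analyticOrderAt (ψ n) 0 = (M : ℕ∞) → analyticOrderAt (ψ 0) 0 = ((2 ^ n * M : ℕ) : ℕ∞) := by
      intro n M hM
      obtain ⟨g, hga, hg0, hgev⟩ := ((an n).analyticOrderAt_eq_natCast (n := M)).mp hM
      apply ((an 0).analyticOrderAt_eq_natCast).mpr
      refine ⟨fun z => (g z) ^ (2 ^ n), hga.pow _, pow_ne_zero _ hg0, ?_⟩
      filter_upwards [hgev, isOpen_ball.eventually_mem h0mem] with z h1 h2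
      rw [hpow n z h2, h1]
      simp only [smul_eq_mul, sub_zero, mul_pow, ← pow_mul]
      ring_nf
    obtain ⟨M0, hM0, _⟩ := ordfin 0
    obtain ⟨M1, hM1, hM1ge⟩ := ordfin (M0 + 1)
    have e0 : analyticOrderAt (ψ 0) 0 = ((2 ^ 0 * M0 : ℕ) : ℕ∞) := by
      rw [hM0]; norm_num
    have e1 := key2 (M0 + 1) M1 hM1
    rw [e0] at e1
    have : (2 ^ 0 * M0 : ℕ) = (2 ^ (M0 + 1) * M1 : ℕ) := by exact_mod_cast e1
    have h2p : M0 < 2 ^ (M0 + 1) :=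
      lt_of_lt_of_le (Nat.lt_two_pow_self (n := M0)) (Nat.pow_le_pow_right (by norm_num) (by omega))
    have h2q : 2 ^ (M0 + 1) ≤ 2 ^ (M0 + 1) * M1 := Nat.le_mul_of_pos_right _ (by omega)
    omega
  -- Step 5: the global square Ψ extends exp (I h z), with Ψ 0 ≠ 0
  have h0mem : (0:ℂ) ∈ ball (0:ℂ) 1 := mem_ball_self one_pos
  set Ψ : ℂ → ℂ := fun z => (ψ 0 z) ^ 2 with hΨ
  have hΨd : DifferentiableOn ℂ Ψ (ball (0:ℂ) 1) := (hψd 0).pow 2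
  have hΨ0 : Ψ 0 ≠ 0 := pow_ne_zero _ hψ00
  have hΨS : ∀ z : ℂ, z ≠ 0 → ‖z‖ < 1 → Complex.exp (Complex.I * h z) = Ψ z := by
    intro z hz0 hz1
    have : Ψ z = (Complex.exp (Complex.I * h z / 2 ^ (0+1))) ^ 2 := by
      simp only [hΨ]
      rw [hψe 0 z hz0 hz1]
    rw [this, ← Complex.exp_nat_mul]
    congr 1
    norm_num
    ring
  -- Step 6: pick a radius r on which Ψ/Ψ0 stays close to 1
  have hcont : ContinuousAt Ψ 0 := (hΨd.differentiableAt (isOpen_ball.mem_nhds h0mem)).continuousAt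
  have t1 : Filter.Tendsto (fun w => ‖Ψ w / Ψ 0 - 1‖) (𝓝 (0:ℂ)) (𝓝 0) := by
    have h2 : ContinuousAt (fun w => ‖Ψ w / Ψ 0 - 1‖) 0 :=
      ((hcont.div_const _).sub continuousAt_const).norm
    have := h2.tendsto
    simpa [div_self hΨ0] using this
  have hev1 : ∀ᶠ w in 𝓝 (0:ℂ), ‖Ψ w / Ψ 0 - 1‖ < 1 :=
    t1.eventually_lt_const (by norm_num)
  have hev2 : ∀ᶠ w in 𝓝 (0:ℂ), w ∈ ball (0:ℂ) 1 := isOpen_ball.eventually_mem h0mem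
  obtain ⟨r, hr0, hrb⟩ := Metric.eventually_nhds_iff.mp (hev1.and hev2)
  have hball : ∀ w : ℂ, ‖w‖ < r → ‖Ψ w / Ψ 0 - 1‖ < 1 ∧ ‖w‖ < 1 := by
    intro w hw
    have := hrb (by rwa [dist_zero_right])
    exact ⟨this.1, mem_ball_zero_iff.mp this.2⟩
  have hΨne : ∀ w : ℂ, ‖w‖ < r → Ψ w ≠ 0 := by
    intro w hw h0'
    have := (hball w hw).1
    rw [h0', zero_div, zero_sub, norm_neg, norm_one] at this
    exact lt_irrefl _ this
  have hslit : ∀ w : ℂ, ‖w‖ < r → (Ψ w / Ψ 0) ∈ Complex.slitPlane := by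
    intro w hw
    rw [Complex.mem_slitPlane_iff]
    left
    have h1 := (hball w hw).1
    have h2 : |((Ψ w / Ψ 0) - 1).re| ≤ ‖Ψ w / Ψ 0 - 1‖ := by
      exact Complex.abs_re_le_norm _
    have h3 : ((Ψ w / Ψ 0) - 1).re = (Ψ w / Ψ 0).re - 1 := by simp
    rw [h3] at h2
    have := (abs_lt.mp (lt_of_le_of_lt h2 h1)).1
    linarith
  -- Step 7: the logarithm L and the function k = I h - L with zero derivative
  set L : ℂ → ℂ := fun w => Complex.log (Ψ w / Ψ 0) with hL
  have hLd : ∀ w : ℂ, ‖w‖ < r → DifferentiableAt ℂ L w := by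
    intro w hw
    have hΨa : DifferentiableAt ℂ Ψ w :=
      hΨd.differentiableAt (isOpen_ball.mem_nhds (mem_ball_zero_iff.mpr (hball w hw).2))
    exact (hΨa.div_const _).clog (hslit w hw)
  have hexpL : ∀ w : ℂ, ‖w‖ < r → Complex.exp (L w) = Ψ w / Ψ 0 :=
    fun w hw => Complex.exp_log (div_ne_zero (hΨne w hw) hΨ0)
  set k : ℂ → ℂ := fun w => Complex.I * h w - L w with hk
  have hexpk : ∀ u : ℂ, ‖u‖ < r → u ≠ 0 → Complex.exp (k u) = Ψ 0 := by
    intro u hur hu0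
    have : Complex.exp (k u) = Complex.exp (Complex.I * h u) / Complex.exp (L u) := by
      rw [hk, Complex.exp_sub]
    rw [this, hexpL u hur, hΨS u hu0 (hball u hur).2]
    rw [div_div_eq_mul_div, mul_comm, mul_div_assoc, div_self (hΨne u hur), mul_one]
  have hkd : ∀ w : ℂ, ‖w‖ < r → w ≠ 0 → HasDerivAt k 0 w := by
    intro w hwr hw0
    have hwS : w ∈ {z : ℂ | z ≠ 0 ∧ ‖z‖ < 1} := ⟨hw0, (hball w hwr).2⟩
    have hhw : DifferentiableAt ℂ h w :=
      (hh w hwS).differentiableAt (hSopen.mem_nhds hwS)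
    have hkk : HasDerivAt k (Complex.I * deriv h w - deriv L w) w :=
      ((hhw.hasDerivAt.const_mul Complex.I).sub (hLd w hwr).hasDerivAt)
    have hevc : (fun u => Complex.exp (k u)) =ᶠ[𝓝 w] fun _ => Ψ 0 := by
      have e1 : ∀ᶠ u in 𝓝 w, u ∈ ball (0:ℂ) r :=
        isOpen_ball.eventually_mem (mem_ball_zero_iff.mpr hwr)
      have e2 : ∀ᶠ u in 𝓝 w, u ≠ 0 := eventually_ne_nhds hw0
      filter_upwards [e1, e2] with u h1 h2
      exact hexpk u (mem_ball_zero_iff.mp h1) h2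
    have hd1 : HasDerivAt (fun u => Complex.exp (k u))
        (Complex.exp (k w) * (Complex.I * deriv h w - deriv L w)) w := hkk.cexp
    have hd2 : HasDerivAt (fun u => Complex.exp (k u)) 0 w :=
      (hasDerivAt_const w (Ψ 0)).congr_of_eventuallyEq hevc
    have huniq := hd1.unique hd2
    have hz : Complex.I * deriv h w - deriv L w = 0 := by
      rcases mul_eq_zero.mp huniq with hc | hc
      · exact absurd hc (Complex.exp_ne_zero _)
      · exact hc
    exact hz ▸ hkk
  -- Step 8: k is constant on convex pieces covering the punctured ball of radius r
  have piece : ∀ P : Set ℂ, IsOpen P → Convex ℝ P → (∀ x ∈ P, ‖x‖ < r ∧ x ≠ 0) →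
      ∀ x ∈ P, ∀ y ∈ P, k x = k y := by
    intro P hPo hPc hPsub x hx y hy
    apply hPc.is_const_of_fderivWithin_eq_zero (𝕜 := ℂ) ?_ ?_ hx hy
    · intro u hu
      exact ((hkd u (hPsub u hu).1 (hPsub u hu).2).differentiableAt).differentiableWithinAt
    · intro u hu
      rw [fderivWithin_of_isOpen hPo hu,
        (hkd u (hPsub u hu).1 (hPsub u hu).2).hasFDerivAt.fderiv]
      exact ContinuousLinearMap.ext fun v => by simp
  have hpt : ∀ x y : ℝ, ‖(x:ℂ) + (y:ℝ) * Complex.I‖ ≤ |x| + |y| := by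
    intro x y
    calc ‖(x:ℂ) + (y:ℝ) * Complex.I‖ ≤ ‖(x:ℂ)‖ + ‖((y:ℝ):ℂ) * Complex.I‖ := norm_add_le _ _
      _ = |x| + |y| := by
        rw [norm_mul, Complex.norm_I, mul_one, Complex.norm_real, Complex.norm_real,
          Real.norm_eq_abs, Real.norm_eq_abs]
  have hre : ∀ x y : ℝ, ((x:ℂ) + (y:ℝ) * Complex.I).re = x := by intro x y; simp
  have him : ∀ x y : ℝ, ((x:ℂ) + (y:ℝ) * Complex.I).im = y := by intro x y; simp
  have hmem : ∀ x y : ℝ, |x| + |y| < r → ((x:ℂ) + (y:ℝ) * Complex.I) ∈ ball (0:ℂ) r :=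
    fun x y hxy => mem_ball_zero_iff.mpr (lt_of_le_of_lt (hpt x y) hxy)
  have hr2 : (0:ℝ) < r/2 := by linarith
  have hr4 : (0:ℝ) < r/4 := by linarith
  have hP1 := piece (ball (0:ℂ) r ∩ {w : ℂ | 0 < w.im})
    (isOpen_ball.inter (isOpen_lt continuous_const Complex.continuous_im))
    ((convex_ball _ _).inter (convex_halfSpace_im_gt 0))
    (by rintro x ⟨hx1, hx2⟩
        refine ⟨mem_ball_zero_iff.mp hx1, ?_⟩
        rintro rfl; simp at hx2)
  have hP2 := piece (ball (0:ℂ) r ∩ {w : ℂ | w.re < 0})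
    (isOpen_ball.inter (isOpen_lt Complex.continuous_re continuous_const))
    ((convex_ball _ _).inter (convex_halfSpace_re_lt 0))
    (by rintro x ⟨hx1, hx2⟩
        refine ⟨mem_ball_zero_iff.mp hx1, ?_⟩
        rintro rfl; simp at hx2)
  have hP3 := piece (ball (0:ℂ) r ∩ {w : ℂ | w.im < 0})
    (isOpen_ball.inter (isOpen_lt Complex.continuous_im continuous_const))
    ((convex_ball _ _).inter (convex_halfSpace_im_lt 0))
    (by rintro x ⟨hx1, hx2⟩
        refine ⟨mem_ball_zero_iff.mp hx1, ?_⟩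
        rintro rfl; simp at hx2)
  have hP4 := piece (ball (0:ℂ) r ∩ {w : ℂ | 0 < w.re})
    (isOpen_ball.inter (isOpen_lt continuous_const Complex.continuous_re))
    ((convex_ball _ _).inter (convex_halfSpace_re_gt 0))
    (by rintro x ⟨hx1, hx2⟩
        refine ⟨mem_ball_zero_iff.mp hx1, ?_⟩
        rintro rfl; simp at hx2)
  have haP1 : ((0:ℝ):ℂ) + ((r/2):ℝ) * Complex.I ∈ ball (0:ℂ) r ∩ {w : ℂ | 0 < w.im} :=
    ⟨hmem 0 (r/2) (by rw [abs_zero, abs_of_pos hr2]; linarith),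
     by rw [Set.mem_setOf_eq, him]; linarith⟩
  have hb12P1 : ((-(r/4):ℝ):ℂ) + ((r/4):ℝ) * Complex.I ∈ ball (0:ℂ) r ∩ {w : ℂ | 0 < w.im} :=
    ⟨hmem (-(r/4)) (r/4) (by rw [abs_neg, abs_of_pos hr4]; linarith),
     by rw [Set.mem_setOf_eq, him]; linarith⟩
  have hb12P2 : ((-(r/4):ℝ):ℂ) + ((r/4):ℝ) * Complex.I ∈ ball (0:ℂ) r ∩ {w : ℂ | w.re < 0} :=
    ⟨hmem (-(r/4)) (r/4) (by rw [abs_neg, abs_of_pos hr4]; linarith),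
     by rw [Set.mem_setOf_eq, hre]; linarith⟩
  have hb23P2 : ((-(r/4):ℝ):ℂ) + ((-(r/4)):ℝ) * Complex.I ∈ ball (0:ℂ) r ∩ {w : ℂ | w.re < 0} :=
    ⟨hmem (-(r/4)) (-(r/4)) (by rw [abs_neg, abs_of_pos hr4]; linarith),
     by rw [Set.mem_setOf_eq, hre]; linarith⟩
  have hb23P3 : ((-(r/4):ℝ):ℂ) + ((-(r/4)):ℝ) * Complex.I ∈ ball (0:ℂ) r ∩ {w : ℂ | w.im < 0} :=
    ⟨hmem (-(r/4)) (-(r/4)) (by rw [abs_neg, abs_of_pos hr4]; linarith),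
     by rw [Set.mem_setOf_eq, him]; linarith⟩
  have hb41P4 : (((r/4):ℝ):ℂ) + ((r/4):ℝ) * Complex.I ∈ ball (0:ℂ) r ∩ {w : ℂ | 0 < w.re} :=
    ⟨hmem (r/4) (r/4) (by rw [abs_of_pos hr4]; linarith),
     by rw [Set.mem_setOf_eq, hre]; linarith⟩
  have hb41P1 : (((r/4):ℝ):ℂ) + ((r/4):ℝ) * Complex.I ∈ ball (0:ℂ) r ∩ {w : ℂ | 0 < w.im} :=
    ⟨hmem (r/4) (r/4) (by rw [abs_of_pos hr4]; linarith),
     by rw [Set.mem_setOf_eq, him]; linarith⟩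
  set a : ℂ := ((0:ℝ):ℂ) + ((r/2):ℝ) * Complex.I with hadef
  have kconst : ∀ z : ℂ, ‖z‖ < r → z ≠ 0 → k z = k a := by
    intro z hzr hz0
    have hzball : z ∈ ball (0:ℂ) r := mem_ball_zero_iff.mpr hzr
    rcases lt_trichotomy z.im 0 with himz | himz | himz
    · rw [hP3 z ⟨hzball, himz⟩ _ hb23P3, hP2 _ hb23P2 _ hb12P2, hP1 _ hb12P1 _ haP1]
    · have hrez : z.re ≠ 0 := by
        intro hre0
        exact hz0 (Complex.ext hre0 himz)
      rcases lt_or_gt_of_ne hrez with hrez' | hrez'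
      · rw [hP2 z ⟨hzball, hrez'⟩ _ hb12P2, hP1 _ hb12P1 _ haP1]
      · rw [hP4 z ⟨hzball, hrez'⟩ _ hb41P4, hP1 _ hb41P1 _ haP1]
    · exact hP1 z ⟨hzball, himz⟩ _ haP1
  -- Step 9: conclude, defining the extension by the explicit formula near 0
  have hform : ∀ z : ℂ, ‖z‖ < r → z ≠ 0 → h z = -Complex.I * (k a + L z) := by
    intro z hzr hz0
    have h1 : Complex.I * h z - L z = k a := kconst z hzr hz0
    have h2 : Complex.I * h z = k a + L z := by linear_combination h1
    have h3 : -Complex.I * (Complex.I * h z) = h z := by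
      rw [← mul_assoc, neg_mul, Complex.I_mul_I, neg_neg, one_mul]
    rw [← h3, h2]
  set F0 : ℂ → ℂ := fun w => -Complex.I * (k a + L w) with hF0def
  have hF0d : ∀ w : ℂ, ‖w‖ < r → DifferentiableAt ℂ F0 w := fun w hw =>
    ((hLd w hw).const_add (k a)).const_mul (-Complex.I)
  refine ⟨Function.update h 0 (F0 0), ?_, ?_⟩
  · intro z hz
    rcases eq_or_ne z 0 with rfl | hz0
    · apply DifferentiableAt.differentiableWithinAt
      have hev : Function.update h 0 (F0 0) =ᶠ[𝓝 (0:ℂ)] F0 := by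
        filter_upwards [isOpen_ball.eventually_mem (mem_ball_self hr0 : (0:ℂ) ∈ ball (0:ℂ) r)]
          with w hw
        rcases eq_or_ne w 0 with rfl | hw0
        · simp
        · rw [Function.update_of_ne hw0, hform w (mem_ball_zero_iff.mp hw) hw0]
      exact (hev.differentiableAt_iff).mpr (hF0d 0 (by simpa using hr0))
    · apply DifferentiableAt.differentiableWithinAt
      have hev : Function.update h 0 (F0 0) =ᶠ[𝓝 z] h := by
        filter_upwards [eventually_ne_nhds hz0] with w hw
        exact Function.update_of_ne hw _ _
      refine (hev.differentiableAt_iff).mpr ?_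
      have hzS : z ∈ {w : ℂ | w ≠ 0 ∧ ‖w‖ < 1} := ⟨hz0, mem_ball_zero_iff.mp hz⟩
      exact (hh z hzS).differentiableAt (hSopen.mem_nhds hzS)
  · intro z hz0 _
    exact Function.update_of_ne hz0 _ _
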